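/- arXiv:2009.09874 — 2 statements merged into one kernel-verified Lean document; each statement's English description precedes it below -/
import Mathlib

section
/- Let ν be a Borel probability measure on ℝ and let z ∈ ℂ with Im z ≠ 0. Define K : ℝ² → ℂ by K(x,y) = (1/(z−x)² − 1/(z−y)²)/(x−y) for x ≠ y and K(x,x) = 2/(z−x)³. Then (1/2) ∬_{ℝ²} (x+y) K(x,y) ν(dx) ν(dy) = − ∫ 1/(z−x)² ν(dx) − (∫ 1/(z−x) ν(dx))² + 2z (∫ 1/(z−x) ν(dx)) (∫ 1/(z−x)² ν(dx)). -/
open MeasureTheory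

/-- the symmetrized interaction kernel coming from `f(v) = 1/(z-v)`
integrates against `ν ⊗ ν` to an expression in the Cauchy–Stieltjes transform of `ν`. -/
theorem kernel_double_integral_identity
    (ν : Measure ℝ) [IsProbabilityMeasure ν] (z : ℂ) (hz : z.im ≠ 0)
    (K : ℝ → ℝ → ℂ)
    (hK : ∀ x y : ℝ, K x y =
      if x = y then 2 / (z - (x : ℂ)) ^ 3
      else (1 / (z - (x : ℂ)) ^ 2 - 1 / (z - (y : ℂ)) ^ 2) / ((x : ℂ) - (y : ℂ))) :
    (1 / 2 : ℂ) * ∫ p : ℝ × ℝ, ((p.1 : ℂ) + (p.2 : ℂ)) * K p.1 p.2 ∂(ν.prod ν)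
      = - (∫ x : ℝ, 1 / (z - (x : ℂ)) ^ 2 ∂ν)
        - (∫ x : ℝ, 1 / (z - (x : ℂ)) ∂ν) ^ 2
        + 2 * z * (∫ x : ℝ, 1 / (z - (x : ℂ)) ∂ν) * (∫ x : ℝ, 1 / (z - (x : ℂ)) ^ 2 ∂ν) := by
  set g : ℝ → ℂ := fun x => 1 / (z - (x : ℂ)) with hg
  have hne : ∀ x : ℝ, z - (x : ℂ) ≠ 0 := by
    intro x h
    apply hz
    have : (z - (x : ℂ)).im = 0 := by rw [h]; simp
    simpa using this
  have hcg : Continuous g := by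
    apply continuous_const.div (continuous_const.sub Complex.continuous_ofReal) hne
  have hB : ∀ x : ℝ, ‖g x‖ ≤ 1 / |z.im| := by
    intro x
    have h1 : |z.im| ≤ ‖z - (x : ℂ)‖ := by
      have := Complex.abs_im_le_norm (z - (x : ℂ))
      simpa using this
    have h0 : 0 < |z.im| := abs_pos.mpr hz
    simp only [hg, norm_div, norm_one]
    exact one_div_le_one_div_of_le h0 h1
  have hBnn : (0:ℝ) ≤ 1 / |z.im| := by positivity
  -- integrability of products of powers
  have intg : ∀ m n : ℕ, Integrable (fun p : ℝ × ℝ => g p.1 ^ m * g p.2 ^ n) (ν.prod ν) := by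
    intro m n
    have hc : Continuous (fun p : ℝ × ℝ => g p.1 ^ m * g p.2 ^ n) :=
      ((hcg.comp continuous_fst).pow m).mul ((hcg.comp continuous_snd).pow n)
    refine ⟨hc.aestronglyMeasurable, ?_⟩
    apply HasFiniteIntegral.of_bounded (C := (1 / |z.im|) ^ m * (1 / |z.im|) ^ n)
    filter_upwards with p
    rw [norm_mul, norm_pow, norm_pow]
    exact mul_le_mul (pow_le_pow_left₀ (norm_nonneg _) (hB _) m)
      (pow_le_pow_left₀ (norm_nonneg _) (hB _) n) (by positivity) (by positivity)
  -- pointwise identity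
  have key : ∀ p : ℝ × ℝ, ((p.1 : ℂ) + (p.2 : ℂ)) * K p.1 p.2
      = 2 * z * (g p.1 ^ 2 * g p.2 ^ 1) + 2 * z * (g p.1 ^ 1 * g p.2 ^ 2)
        - g p.1 ^ 2 * g p.2 ^ 0 - g p.1 ^ 0 * g p.2 ^ 2 - 2 * (g p.1 ^ 1 * g p.2 ^ 1) := by
    rintro ⟨x, y⟩
    simp only [hK, hg]
    obtain ⟨a, ha, hxa⟩ : ∃ a, a ≠ 0 ∧ (x : ℂ) = z - a := ⟨_, hne x, by ring⟩
    obtain ⟨b, hb, hyb⟩ : ∃ b, b ≠ 0 ∧ (y : ℂ) = z - b := ⟨_, hne y, by ring⟩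
    have hza : z - (x : ℂ) = a := by rw [hxa]; ring
    have hzb : z - (y : ℂ) = b := by rw [hyb]; ring
    by_cases h : x = y
    · subst h
      rw [if_pos rfl, hza, hxa]
      have e1 : a * a⁻¹ = 1 := mul_inv_cancel₀ ha
      linear_combination (-4 * a⁻¹ ^ 2) * e1
    · have hxy : (x : ℂ) - (y : ℂ) ≠ 0 := by
        simpa [sub_eq_zero] using fun hc => h (by exact_mod_cast hc)
      have hab : (x : ℂ) - (y : ℂ) = b - a := by rw [hxa, hyb]; ring
      have hba : b - a ≠ 0 := hab ▸ hxy
      rw [if_neg h, hza, hzb, hab, hxa, hyb]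
      have e1 : a * a⁻¹ = 1 := mul_inv_cancel₀ ha
      have e2 : b * b⁻¹ = 1 := mul_inv_cancel₀ hb
      have e3 : (b - a) * (b - a)⁻¹ = 1 := mul_inv_cancel₀ hba
      linear_combination
        ((2 * z - a - b) * (b - a)⁻¹ * b⁻¹ ^ 2 * (a * a⁻¹ + 1) + 2 * z * a⁻¹ * b⁻¹ ^ 2
          - b⁻¹ ^ 2 * (a * a⁻¹ + 1) - 2 * a⁻¹ * b⁻¹ ^ 2 * b) * e1
        + (-(2 * z - a - b) * (b - a)⁻¹ * a⁻¹ ^ 2 * (b * b⁻¹ + 1) + 2 * z * a⁻¹ ^ 2 * b⁻¹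
          - a⁻¹ ^ 2 * (b * b⁻¹ + 1) - 2 * a⁻¹ * b⁻¹) * e2
        + ((2 * z - a - b) * (a + b) * a⁻¹ ^ 2 * b⁻¹ ^ 2) * e3
  have hrw : (∫ p : ℝ × ℝ, ((p.1 : ℂ) + (p.2 : ℂ)) * K p.1 p.2 ∂(ν.prod ν))
      = ∫ p : ℝ × ℝ, (2 * z * (g p.1 ^ 2 * g p.2 ^ 1) + 2 * z * (g p.1 ^ 1 * g p.2 ^ 2)
        - g p.1 ^ 2 * g p.2 ^ 0 - g p.1 ^ 0 * g p.2 ^ 2 - 2 * (g p.1 ^ 1 * g p.2 ^ 1)) ∂(ν.prod ν) :=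
    integral_congr_ae (Filter.Eventually.of_forall key)
  rw [hrw]
  have i1 : Integrable (fun p : ℝ × ℝ => 2 * z * (g p.1 ^ 2 * g p.2 ^ 1)) (ν.prod ν) :=
    (intg 2 1).const_mul (2 * z)
  have i2 : Integrable (fun p : ℝ × ℝ => 2 * z * (g p.1 ^ 1 * g p.2 ^ 2)) (ν.prod ν) :=
    (intg 1 2).const_mul (2 * z)
  have i3 := intg 2 0
  have i4 := intg 0 2
  have i5 : Integrable (fun p : ℝ × ℝ => 2 * (g p.1 ^ 1 * g p.2 ^ 1)) (ν.prod ν) :=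
    (intg 1 1).const_mul (2 : ℂ)
  have i12 : Integrable (fun p : ℝ × ℝ => 2 * z * (g p.1 ^ 2 * g p.2 ^ 1)
      + 2 * z * (g p.1 ^ 1 * g p.2 ^ 2)) (ν.prod ν) := i1.add i2
  have i123 : Integrable (fun p : ℝ × ℝ => 2 * z * (g p.1 ^ 2 * g p.2 ^ 1)
      + 2 * z * (g p.1 ^ 1 * g p.2 ^ 2) - g p.1 ^ 2 * g p.2 ^ 0) (ν.prod ν) := i12.sub i3
  have i1234 : Integrable (fun p : ℝ × ℝ => 2 * z * (g p.1 ^ 2 * g p.2 ^ 1)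
      + 2 * z * (g p.1 ^ 1 * g p.2 ^ 2) - g p.1 ^ 2 * g p.2 ^ 0
      - g p.1 ^ 0 * g p.2 ^ 2) (ν.prod ν) := i123.sub i4
  rw [integral_sub i1234 i5,
      integral_sub i123 i4,
      integral_sub i12 i3,
      integral_add i1 i2,
      MeasureTheory.integral_const_mul, MeasureTheory.integral_const_mul, MeasureTheory.integral_const_mul]
  rw [integral_prod_mul (fun x => g x ^ 2) (fun y => g y ^ 1),
      integral_prod_mul (fun x => g x ^ 1) (fun y => g y ^ 2),
      integral_prod_mul (fun x => g x ^ 2) (fun y => g y ^ 0),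
      integral_prod_mul (fun x => g x ^ 0) (fun y => g y ^ 2),
      integral_prod_mul (fun x => g x ^ 1) (fun y => g y ^ 1)]
  have e0 : (∫ x : ℝ, g x ^ 0 ∂ν) = 1 := by simp
  have e1 : (∫ x : ℝ, g x ^ 1 ∂ν) = ∫ x : ℝ, 1 / (z - (x : ℂ)) ∂ν := by simp [hg]
  have e2 : (∫ x : ℝ, g x ^ 2 ∂ν) = ∫ x : ℝ, 1 / (z - (x : ℂ)) ^ 2 ∂ν := by
    apply integral_congr_ae
    filter_upwards with x
    simp [hg, div_pow]
  rw [e0, e1, e2]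
  ring
end

section
/- Let β₁, β₂, κ > 0, γ > 0, α ∈ (0,1], and let (ν_t)_{t≥0} be a measurable family of Borel probability measures on ℝ supported in [0,∞) satisfying the mean-field Wishart evolution equation. Assume each ν_t has finite first moment m_t¹ = ∫ x ν_t(dx) and that t ↦ m_t¹ is continuous. Then for every t ≥ 0: m_t¹ = β₁κ²/(2γ) + (m₀¹ − β₁κ²/(2γ)) e^{−2γt}. -/
open MeasureTheory

/-- Kernel `(f'(x) - f'(y))/(x - y)` with the convention `f''(x)` on the diagonal. -/
noncomputable def wKernel (f : ℝ → ℝ) (x y : ℝ) : ℝ :=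
  if x = y then deriv (deriv f) x else (deriv f x - deriv f y) / (x - y)

/-- The mean-field Wishart evolution equation: for every twice continuously differentiable
test function for which all the integrals below converge absolutely, and every `t ≥ 0`,
the weak integro-differential equation holds. -/
def MeanFieldWishart (β₁ β₂ κ γ α : ℝ) (ν : ℝ → Measure ℝ) : Prop :=
  ∀ f : ℝ → ℝ, ContDiff ℝ 2 f →
    (∀ s : ℝ, 0 ≤ s →
      Integrable f (ν s) ∧
      Integrable (fun x => (β₁ * κ ^ 2 - 2 * γ * x) * deriv f x) (ν s) ∧
      Integrable (fun p : ℝ × ℝ => (p.1 + p.2) * wKernel f p.1 p.2) ((ν s).prod (ν s))) →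
    (∀ t : ℝ, 0 ≤ t →
      IntegrableOn (fun s => ∫ x, (β₁ * κ ^ 2 - 2 * γ * x) * deriv f x ∂(ν s)) (Set.Ioc 0 t) ∧
      IntegrableOn (fun s => ∫ x, ∫ y, (x + y) * wKernel f x y ∂(ν s) ∂(ν s)) (Set.Ioc 0 t)) →
    ∀ t : ℝ, 0 ≤ t →
      ∫ x, f x ∂(ν t) = ∫ x, f x ∂(ν 0)
        + ∫ s in Set.Ioc (0:ℝ) t, ∫ x, (β₁ * κ ^ 2 - 2 * γ * x) * deriv f x ∂(ν s)
        + (α * β₁ * β₂ * κ ^ 2 / 2) *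
            ∫ s in Set.Ioc (0:ℝ) t, ∫ x, ∫ y, (x + y) * wKernel f x y ∂(ν s) ∂(ν s)

/-- explicit evolution of the first moment of the mean-field Wishart flow. -/
theorem wishart_first_moment
    (β₁ β₂ κ γ α : ℝ) (hβ₁ : 0 < β₁) (hβ₂ : 0 < β₂) (hκ : 0 < κ) (hγ : 0 < γ)
    (hα : α ∈ Set.Ioc (0:ℝ) 1)
    (ν : ℝ → Measure ℝ) (hprob : ∀ t : ℝ, IsProbabilityMeasure (ν t))
    (hsupp : ∀ t : ℝ, ν t (Set.Iio 0) = 0)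
    (hMF : MeanFieldWishart β₁ β₂ κ γ α ν)
    (hint : ∀ t : ℝ, Integrable (fun x : ℝ => x) (ν t))
    (hcont : ContinuousOn (fun t : ℝ => ∫ x, x ∂(ν t)) (Set.Ici 0)) :
    ∀ t : ℝ, 0 ≤ t →
      ∫ x, x ∂(ν t)
        = β₁ * κ ^ 2 / (2 * γ)
          + ((∫ x, x ∂(ν 0)) - β₁ * κ ^ 2 / (2 * γ)) * Real.exp (-(2 * γ * t)) := by
  have hγ2 : (2 * γ) ≠ 0 := by positivity
  set c : ℝ := β₁ * κ ^ 2 with hc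
  set g : ℝ → ℝ := fun t => ∫ x, x ∂(ν t) with hgdef
  haveI := hprob
  have hderiv : deriv (fun x : ℝ => x) = fun _ => (1:ℝ) := by
    funext z; simp
  have hker : ∀ x y : ℝ, wKernel (fun x : ℝ => x) x y = 0 := by
    intro x y
    unfold wKernel
    rw [hderiv]
    split <;> simp
  have h1 : ∀ s : ℝ,
      (∫ x, (β₁ * κ ^ 2 - 2 * γ * x) * deriv (fun x : ℝ => x) x ∂(ν s))
        = c - 2 * γ * g s := by
    intro s
    have heq : (fun x : ℝ => (β₁ * κ ^ 2 - 2 * γ * x) * deriv (fun x : ℝ => x) x)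
        = fun x : ℝ => β₁ * κ ^ 2 - 2 * γ * x := by
      funext x; rw [hderiv]; ring
    rw [heq, integral_sub (integrable_const _) ((hint s).const_mul _),
      integral_const, integral_const_mul]
    simp [hc, hgdef]
  have h2 : ∀ s : ℝ, (∫ x, ∫ y, (x + y) * wKernel (fun x : ℝ => x) x y ∂(ν s) ∂(ν s)) = 0 := by
    intro s
    simp [hker]
  -- the evolution equation for f = id
  have key : ∀ t : ℝ, 0 ≤ t →
      g t = g 0 + ∫ s in (0:ℝ)..t, (c - 2 * γ * g s) := by
    intro t ht
    have hmf := hMF (fun x : ℝ => x) contDiff_id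
      (fun s _ => ⟨hint s,
        by
          have heq : (fun x : ℝ => (β₁ * κ ^ 2 - 2 * γ * x) * deriv (fun x : ℝ => x) x)
              = fun x : ℝ => β₁ * κ ^ 2 - 2 * γ * x := by
            funext x; rw [hderiv]; ring
          rw [heq]
          exact (integrable_const _).sub ((hint s).const_mul _),
        by
          have heq : (fun p : ℝ × ℝ => (p.1 + p.2) * wKernel (fun x : ℝ => x) p.1 p.2)
              = fun _ : ℝ × ℝ => (0:ℝ) := by
            funext p; rw [hker]; ring
          rw [heq]
          exact integrable_const 0⟩)
      (fun t ht => by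
        constructor
        · have heq : (fun s : ℝ => ∫ x, (β₁ * κ ^ 2 - 2 * γ * x) * deriv (fun x : ℝ => x) x ∂(ν s))
              = fun s => c - 2 * γ * g s := by funext s; exact h1 s
          rw [heq]
          have hco : ContinuousOn (fun s : ℝ => c - 2 * γ * g s) (Set.Icc 0 t) :=
            (continuousOn_const.sub (continuousOn_const.mul
              (hcont.mono (fun x hx => hx.1))))
          exact (hco.integrableOn_Icc).mono_set Set.Ioc_subset_Icc_self
        · have heq : (fun s : ℝ => ∫ x, ∫ y,
              (x + y) * wKernel (fun x : ℝ => x) x y ∂(ν s) ∂(ν s)) = fun _ => (0:ℝ) := by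
            funext s; exact h2 s
          rw [heq]
          exact integrableOn_const measure_Ioc_lt_top.ne) t ht
    simp only [h1, h2, integral_zero, mul_zero, add_zero] at hmf
    rw [intervalIntegral.integral_of_le ht]
    exact hmf
  -- the right-hand side solves the same ODE
  set F : ℝ → ℝ := fun t => c / (2 * γ) + (g 0 - c / (2 * γ)) * Real.exp (-(2 * γ * t)) with hFdef
  intro t ht
  suffices h : g t = F t by
    simpa [hFdef, hc, hgdef] using h
  -- uniqueness of ODE solutions
  set v : ℝ → ℝ → ℝ := fun _ x => c - 2 * γ * x with hvdef
  have hlip : ∀ s : ℝ, LipschitzWith (Real.toNNReal (2 * γ)) (v s) := by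
    intro s
    rw [lipschitzWith_iff_dist_le_mul]
    intro x y
    simp only [hvdef, Real.dist_eq]
    rw [Real.coe_toNNReal _ (by positivity)]
    have e1 : c - 2 * γ * x - (c - 2 * γ * y) = 2 * γ * (y - x) := by ring
    rw [e1, abs_mul, abs_of_pos (by positivity : (0:ℝ) < 2 * γ), abs_sub_comm]
  have hgc : ContinuousOn g (Set.Icc 0 t) := hcont.mono (fun x hx => hx.1)
  have hψc : ContinuousOn (fun s => c - 2 * γ * g s) (Set.Ici (0:ℝ)) :=
    continuousOn_const.sub (continuousOn_const.mul hcont)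
  have hg' : ∀ s ∈ Set.Ico (0:ℝ) t, HasDerivWithinAt g (v s (g s)) (Set.Ici s) s := by
    intro s hs
    have hIci : Set.Ici s ⊆ Set.Ici (0:ℝ) := Set.Ici_subset_Ici.2 hs.1
    have hIoi : Set.Ioi s ⊆ Set.Ici (0:ℝ) := fun x hx => le_of_lt (lt_of_le_of_lt hs.1 hx)
    have hii : IntervalIntegrable (fun u => c - 2 * γ * g u) volume 0 s := by
      apply ContinuousOn.intervalIntegrable
      rw [Set.uIcc_of_le hs.1]
      exact hψc.mono (fun x hx => hx.1)
    have hmeas : StronglyMeasurableAtFilter (fun u => c - 2 * γ * g u)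
        (nhdsWithin s (Set.Ioi s)) volume :=
      ⟨Set.Ici 0, Filter.mem_of_superset self_mem_nhdsWithin hIoi,
        hψc.aestronglyMeasurable measurableSet_Ici⟩
    have hcw : ContinuousWithinAt (fun u => c - 2 * γ * g u) (Set.Ioi s) s :=
      ((hψc s hs.1).mono hIoi)
    have hd : HasDerivWithinAt (fun u => g 0 + ∫ x in (0:ℝ)..u, (c - 2 * γ * g x))
        (c - 2 * γ * g s) (Set.Ici s) s :=
      ((intervalIntegral.integral_hasDerivWithinAt_right hii hmeas hcw).const_add (g 0))
    exact hd.congr (fun u hu => key u (le_trans hs.1 hu)) (key s hs.1)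
  have hFc : ContinuousOn F (Set.Icc 0 t) := by
    have : Continuous F := by fun_prop
    exact this.continuousOn
  have hF' : ∀ s ∈ Set.Ico (0:ℝ) t, HasDerivWithinAt F (v s (F s)) (Set.Ici s) s := by
    intro s _
    have h1d : HasDerivAt (fun u : ℝ => -(2 * γ * u)) (-(2 * γ)) s := by
      simpa using ((hasDerivAt_id s).const_mul (2 * γ)).fun_neg
    have h2d : HasDerivAt (fun u : ℝ => Real.exp (-(2 * γ * u)))
        (Real.exp (-(2 * γ * s)) * -(2 * γ)) s := h1d.exp
    have h3d : HasDerivAt F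
        ((g 0 - c / (2 * γ)) * (Real.exp (-(2 * γ * s)) * -(2 * γ))) s :=
      (h2d.const_mul (g 0 - c / (2 * γ))).const_add (c / (2 * γ))
    have : (g 0 - c / (2 * γ)) * (Real.exp (-(2 * γ * s)) * -(2 * γ)) = v s (F s) := by
      simp only [hvdef, hFdef]
      field_simp
      ring
    rw [this] at h3d
    exact h3d.hasDerivWithinAt
  have h0 : g 0 = F 0 := by
    simp only [hFdef]
    rw [mul_zero, neg_zero, Real.exp_zero]
    ring
  exact ODE_solution_unique hlip hgc hg' hFc hF' h0 ⟨ht, le_refl t⟩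
end
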